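/- There exists a positive constant U, depending only on S, A, γ, D_S, and D_A, such that for any transition function τ, any initial state distribution μ0, any reward functions R1, R2 for which D^EPIC(R1,R2) is defined (i.e., C^EPIC(R1) and C^EPIC(R2) have nonzero variance under the sampling distribution), and any policies π1, π2 with J_{R2}(π2) ≥ J_{R2}(π1), one has J_{R1}(π1) − J_{R1}(π2) ≤ U · ‖R1‖_2 · D^EPIC(R1,R2), where ‖R1‖_2 = √(∑_{(s,a,s')} R1(s,a,s')²). -/

import Mathlib

namespace RewardPaper

/-- A probability distribution on a finite type, represented as a function. -/
def IsDist {X : Type*} [Fintype X] (p : X → ℝ) : Prop :=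
  (∀ x, 0 ≤ p x) ∧ (∑ x, p x) = 1

/-- Reward functions on `S × A × S`. -/
abbrev Reward (S A : Type*) := S → A → S → ℝ

/-- A policy assigns to each state a probability distribution over actions. -/
def IsPolicy {S A : Type*} [Fintype A] (π : S → A → ℝ) : Prop := ∀ s, IsDist (π s)

/-- The type of policies. -/
abbrev Policy (S A : Type*) [Fintype A] := {π : S → A → ℝ // IsPolicy π}

/-- The distribution over states at time `t` of the Markov chain induced by
`τ`, `μ0` and the policy `π`. -/
noncomputable def stateDist {S A : Type*} [Fintype S] [Fintype A]
    (τ : S → A → S → ℝ) (μ0 : S → ℝ) (π : S → A → ℝ) : ℕ → S → ℝ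
  | 0 => μ0
  | (t + 1) => fun s' => ∑ s, ∑ a, stateDist τ μ0 π t s * π s a * τ s a s'

/-- Policy evaluation function `J_R(π)`: expected discounted return of `π` under `R`. -/
noncomputable def J {S A : Type*} [Fintype S] [Fintype A]
    (τ : S → A → S → ℝ) (μ0 : S → ℝ) (γ : ℝ) (R : Reward S A)
    (π : S → A → ℝ) : ℝ :=
  ∑' t : ℕ, γ ^ t * ∑ s, ∑ a, ∑ s', stateDist τ μ0 π t s * π s a * τ s a s' * R s a s'

/-- The value function `V^π_R(s)`: expected discounted return starting from `s`. -/
noncomputable def V {S A : Type*} [Fintype S] [Fintype A] [DecidableEq S]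
    (τ : S → A → S → ℝ) (γ : ℝ) (R : Reward S A) (π : S → A → ℝ) (s : S) : ℝ :=
  J τ (fun s0 => if s0 = s then 1 else 0) γ R π

/-- Every state is reachable with positive probability under `τ` from `μ0`. -/
def AllReachable {S A : Type*} [Fintype S] [Fintype A]
    (τ : S → A → S → ℝ) (μ0 : S → ℝ) : Prop :=
  ∀ s, ∃ (π : S → A → ℝ) (t : ℕ), IsPolicy π ∧ 0 < stateDist τ μ0 π t s

/-- `R2` is produced by potential shaping of `R1`. -/
def PotentialShaping {S A : Type*} (γ : ℝ) (R1 R2 : Reward S A) : Prop :=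
  ∃ Φ : S → ℝ, ∀ s a s', R2 s a s' = R1 s a s' + γ * Φ s' - Φ s

/-- `R1` and `R2` differ by S'-redistribution with respect to `τ`. -/
def SRedist {S A : Type*} [Fintype S] (τ : S → A → S → ℝ) (R1 R2 : Reward S A) : Prop :=
  ∀ s a, (∑ s', τ s a s' * R1 s a s') = (∑ s', τ s a s' * R2 s a s')

/-- `R1` and `R2` differ by (a composition of) potential shaping and S'-redistribution. -/
def DifferBy {S A : Type*} [Fintype S] (γ : ℝ) (τ : S → A → S → ℝ)
    (R1 R2 : Reward S A) : Prop :=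
  ∃ R' : Reward S A, PotentialShaping γ R1 R' ∧ SRedist τ R' R2

/-- A canonicalisation function. -/
def IsCanon {S A : Type*} [Fintype S] (γ : ℝ) (τ : S → A → S → ℝ)
    (c : Reward S A → Reward S A) : Prop :=
  IsLinearMap ℝ c ∧ (∀ R, DifferBy γ τ R (c R)) ∧
    ∀ R1 R2, c R1 = c R2 ↔ DifferBy γ τ R1 R2

/-- `n` is a norm on the subset `X` of reward space. -/
def IsNormOn {S A : Type*} (X : Set (Reward S A)) (n : Reward S A → ℝ) : Prop :=
  (∀ x ∈ X, 0 ≤ n x) ∧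
  (∀ x ∈ X, (n x = 0 ↔ x = 0)) ∧
  (∀ x ∈ X, ∀ r : ℝ, n (r • x) = |r| * n x) ∧
  (∀ x ∈ X, ∀ y ∈ X, n (x + y) ≤ n x + n y)

/-- `p` is a norm on all of reward space. -/
def IsNorm {S A : Type*} (p : Reward S A → ℝ) : Prop := IsNormOn Set.univ p

/-- `m` is a metric on the subset `X` of reward space. -/
def IsMetricOn {S A : Type*} (X : Set (Reward S A)) (m : Reward S A → Reward S A → ℝ) : Prop :=
  (∀ x ∈ X, m x x = 0) ∧ (∀ x ∈ X, ∀ y ∈ X, 0 ≤ m x y) ∧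
  (∀ x ∈ X, ∀ y ∈ X, m x y = m y x) ∧
  (∀ x ∈ X, ∀ y ∈ X, ∀ z ∈ X, m x z ≤ m x y + m y z)

/-- `m` is an admissible metric on `X`: a metric bilipschitz equivalent to some norm. -/
def IsAdmissibleOn {S A : Type*} (X : Set (Reward S A))
    (m : Reward S A → Reward S A → ℝ) : Prop :=
  IsMetricOn X m ∧
  ∃ (p : Reward S A → ℝ) (l u : ℝ), IsNorm p ∧ 0 < l ∧ 0 < u ∧
    ∀ x ∈ X, ∀ y ∈ X, l * p (x - y) ≤ m x y ∧ m x y ≤ u * p (x - y)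

/-- `d` is a STARC metric. -/
def IsSTARC {S A : Type*} [Fintype S] (γ : ℝ) (τ : S → A → S → ℝ)
    (d : Reward S A → Reward S A → ℝ) : Prop :=
  ∃ (c : Reward S A → Reward S A) (n : Reward S A → ℝ)
    (m : Reward S A → Reward S A → ℝ) (s : Reward S A → Reward S A),
    IsCanon γ τ c ∧ IsNormOn (Set.range c) n ∧
    (∀ R, (n (c R) = 0 → s R = c R) ∧ (n (c R) ≠ 0 → s R = (n (c R))⁻¹ • c R)) ∧
    IsAdmissibleOn (Set.range s) m ∧
    ∀ R1 R2, d R1 R2 = m (s R1) (s R2)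

/-- An EPIC-like canonicalisation function: standardises potential shaping only. -/
def IsEpicLikeCanon {S A : Type*} (γ : ℝ) (c : Reward S A → Reward S A) : Prop :=
  IsLinearMap ℝ c ∧ (∀ R, PotentialShaping γ R (c R)) ∧
    ∀ R1 R2, c R1 = c R2 ↔ PotentialShaping γ R1 R2

/-- `d` is an EPIC-like metric. -/
def IsEpicLike {S A : Type*} (γ : ℝ) (d : Reward S A → Reward S A → ℝ) : Prop :=
  ∃ (c : Reward S A → Reward S A) (n : Reward S A → ℝ)
    (m : Reward S A → Reward S A → ℝ) (s : Reward S A → Reward S A),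
    IsEpicLikeCanon γ c ∧ IsNormOn (Set.range c) n ∧
    (∀ R, (n (c R) = 0 → s R = c R) ∧ (n (c R) ≠ 0 → s R = (n (c R))⁻¹ • c R)) ∧
    IsAdmissibleOn (Set.range c) m ∧
    ∀ R1 R2, d R1 R2 = m (s R1) (s R2)

/-- The maximal value of `J_R` over all policies. -/
noncomputable def maxJ {S A : Type*} [Fintype S] [Fintype A]
    (τ : S → A → S → ℝ) (μ0 : S → ℝ) (γ : ℝ) (R : Reward S A) : ℝ :=
  ⨆ π : Policy S A, J τ μ0 γ R π.1

/-- The minimal value of `J_R` over all policies. -/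
noncomputable def minJ {S A : Type*} [Fintype S] [Fintype A]
    (τ : S → A → S → ℝ) (μ0 : S → ℝ) (γ : ℝ) (R : Reward S A) : ℝ :=
  ⨅ π : Policy S A, J τ μ0 γ R π.1

/-- `R1` and `R2` induce the same ordering of policies. -/
def SameOrder {S A : Type*} [Fintype S] [Fintype A]
    (τ : S → A → S → ℝ) (μ0 : S → ℝ) (γ : ℝ) (R1 R2 : Reward S A) : Prop :=
  ∀ π π' : Policy S A,
    (J τ μ0 γ R1 π.1 ≤ J τ μ0 γ R1 π'.1 ↔ J τ μ0 γ R2 π.1 ≤ J τ μ0 γ R2 π'.1)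

/-- Soundness of a pseudometric on reward space. -/
def Sound {S A : Type*} [Fintype S] [Fintype A]
    (τ : S → A → S → ℝ) (μ0 : S → ℝ) (γ : ℝ)
    (d : Reward S A → Reward S A → ℝ) : Prop :=
  ∃ U : ℝ, 0 < U ∧ ∀ (R1 R2 : Reward S A) (π1 π2 : Policy S A),
    J τ μ0 γ R2 π1.1 ≤ J τ μ0 γ R2 π2.1 →
    J τ μ0 γ R1 π1.1 - J τ μ0 γ R1 π2.1 ≤
      U * (maxJ τ μ0 γ R1 - minJ τ μ0 γ R1) * d R1 R2

/-- Completeness of a pseudometric on reward space. -/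
def Complete {S A : Type*} [Fintype S] [Fintype A]
    (τ : S → A → S → ℝ) (μ0 : S → ℝ) (γ : ℝ)
    (d : Reward S A → Reward S A → ℝ) : Prop :=
  (∃ L : ℝ, 0 < L ∧ ∀ R1 R2 : Reward S A, ∃ π1 π2 : Policy S A,
    J τ μ0 γ R2 π1.1 ≤ J τ μ0 γ R2 π2.1 ∧
    L * (maxJ τ μ0 γ R1 - minJ τ μ0 γ R1) * d R1 R2 ≤
      J τ μ0 γ R1 π1.1 - J τ μ0 γ R1 π2.1) ∧
  ∀ R1 R2 : Reward S A, SameOrder τ μ0 γ R1 R2 → d R1 R2 = 0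

/-- `d` is a pseudometric on reward space. -/
def IsPseudometric {S A : Type*} (d : Reward S A → Reward S A → ℝ) : Prop :=
  (∀ x, d x x = 0) ∧ (∀ x y, 0 ≤ d x y) ∧ (∀ x y, d x y = d y x) ∧
    ∀ x y z, d x z ≤ d x y + d y z

/-- The EPIC canonicalisation. -/
noncomputable def CEpic {S A : Type*} [Fintype S] [Fintype A]
    (DS : S → ℝ) (DA : A → ℝ) (γ : ℝ) (R : Reward S A) : Reward S A :=
  fun s a s' =>
    R s a s'
      + γ * (∑ a', ∑ σ', DA a' * DS σ' * R s' a' σ')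
      - (∑ a', ∑ σ', DA a' * DS σ' * R s a' σ')
      - γ * (∑ σ, ∑ a', ∑ σ', DS σ * DA a' * DS σ' * R σ a' σ')

/-- Mean of `f(S,A,S')` with `S,S' ~ DS` and `A ~ DA` independent. -/
noncomputable def meanD {S A : Type*} [Fintype S] [Fintype A]
    (DS : S → ℝ) (DA : A → ℝ) (f : Reward S A) : ℝ :=
  ∑ s, ∑ a, ∑ s', DS s * DA a * DS s' * f s a s'

/-- Covariance of `f(S,A,S')` and `g(S,A,S')`. -/
noncomputable def covD {S A : Type*} [Fintype S] [Fintype A]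
    (DS : S → ℝ) (DA : A → ℝ) (f g : Reward S A) : ℝ :=
  ∑ s, ∑ a, ∑ s', DS s * DA a * DS s' *
    (f s a s' - meanD DS DA f) * (g s a s' - meanD DS DA g)

/-- Variance of `f(S,A,S')`. -/
noncomputable def varD {S A : Type*} [Fintype S] [Fintype A]
    (DS : S → ℝ) (DA : A → ℝ) (f : Reward S A) : ℝ :=
  covD DS DA f f

/-- Pearson correlation of `f(S,A,S')` and `g(S,A,S')`. -/
noncomputable def pearsonD {S A : Type*} [Fintype S] [Fintype A]
    (DS : S → ℝ) (DA : A → ℝ) (f g : Reward S A) : ℝ :=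
  covD DS DA f g / (Real.sqrt (varD DS DA f) * Real.sqrt (varD DS DA g))

/-- The EPIC distance. -/
noncomputable def DEpic {S A : Type*} [Fintype S] [Fintype A]
    (DS : S → ℝ) (DA : A → ℝ) (γ : ℝ) (R1 R2 : Reward S A) : ℝ :=
  Real.sqrt ((1 - pearsonD DS DA (CEpic DS DA γ R1) (CEpic DS DA γ R2)) / 2)

/-- The DARD canonicalisation. -/
noncomputable def CDard {S A : Type*} [Fintype S] [Fintype A]
    (τ : S → A → S → ℝ) (DA : A → ℝ) (γ : ℝ) (R : Reward S A) : Reward S A :=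
  fun s a s' =>
    R s a s' + ∑ a', DA a' *
      (γ * (∑ σ'', τ s' a' σ'' * R s' a' σ'')
        - (∑ σ', τ s a' σ' * R s a' σ')
        - γ * (∑ σ', ∑ σ'', τ s a' σ' * τ s' a' σ'' * R σ' a' σ''))

/-- The DARD distance. -/
noncomputable def DDard {S A : Type*} [Fintype S] [Fintype A]
    (τ : S → A → S → ℝ) (DS : S → ℝ) (DA : A → ℝ) (γ : ℝ) (R1 R2 : Reward S A) : ℝ :=
  Real.sqrt ((1 - pearsonD DS DA (CDard τ DA γ R1) (CDard τ DA γ R2)) / 2)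

/-- The (unweighted) L2 norm on reward space. -/
noncomputable def l2Norm {S A : Type*} [Fintype S] [Fintype A] (R : Reward S A) : ℝ :=
  Real.sqrt (∑ s, ∑ a, ∑ s', (R s a s') ^ 2)

/-- A weighted L2 norm on reward space. -/
noncomputable def weightedL2 {S A : Type*} [Fintype S] [Fintype A]
    (w : S → A → S → ℝ) (R : Reward S A) : ℝ :=
  Real.sqrt (∑ s, ∑ a, ∑ s', w s a s' * (R s a s') ^ 2)

/-- The L2 norm weighted by the product distribution `DS ⊗ DA ⊗ DS`. -/
noncomputable def l2NormD {S A : Type*} [Fintype S] [Fintype A]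
    (DS : S → ℝ) (DA : A → ℝ) (R : Reward S A) : ℝ :=
  Real.sqrt (∑ s, ∑ a, ∑ s', DS s * DA a * DS s' * (R s a s') ^ 2)

/-- Expected discounted return of a reward function along a sequence of per-timestep
transition distributions. -/
noncomputable def Eret {S A : Type*} [Fintype S] [Fintype A]
    (γ : ℝ) (R : Reward S A) (p : ℕ → (S × A × S) → ℝ) : ℝ :=
  ∑' t : ℕ, γ ^ t * ∑ x : S × A × S, p t x * R x.1 x.2.1 x.2.2

/-! ### Auxiliary lemmas -/

section Aux

variable {S A : Type*} [Fintype S] [Fintype A]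

lemma triple_le_sum {f : S → A → S → ℝ} (hf : ∀ s a s', 0 ≤ f s a s')
    (s : S) (a : A) (s' : S) : f s a s' ≤ ∑ x, ∑ y, ∑ z, f x y z := by
  have h1 : f s a s' ≤ ∑ z, f s a z :=
    Finset.single_le_sum (fun z _ => hf s a z) (Finset.mem_univ s')
  have h2 : (∑ z, f s a z) ≤ ∑ y, ∑ z, f s y z :=
    Finset.single_le_sum (f := fun y => ∑ z, f s y z)
      (fun y _ => Finset.sum_nonneg fun z _ => hf s y z) (Finset.mem_univ a)
  have h3 : (∑ y, ∑ z, f s y z) ≤ ∑ x, ∑ y, ∑ z, f x y z :=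
    Finset.single_le_sum (f := fun x => ∑ y, ∑ z, f x y z)
      (fun x _ => Finset.sum_nonneg fun y _ => Finset.sum_nonneg fun z _ => hf x y z)
      (Finset.mem_univ s)
  linarith

lemma abs_triple_sum_le {f : S → A → S → ℝ} :
    |∑ x, ∑ y, ∑ z, f x y z| ≤ ∑ x, ∑ y, ∑ z, |f x y z| := by
  calc |∑ x, ∑ y, ∑ z, f x y z| ≤ ∑ x, |∑ y, ∑ z, f x y z| :=
        Finset.abs_sum_le_sum_abs _ _
    _ ≤ ∑ x, ∑ y, ∑ z, |f x y z| := by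
        refine Finset.sum_le_sum fun x _ => ?_
        calc |∑ y, ∑ z, f x y z| ≤ ∑ y, |∑ z, f x y z| := Finset.abs_sum_le_sum_abs _ _
          _ ≤ ∑ y, ∑ z, |f x y z| :=
            Finset.sum_le_sum fun y _ => Finset.abs_sum_le_sum_abs _ _

lemma stateDist_nonneg {τ : S → A → S → ℝ} {μ0 : S → ℝ} {π : S → A → ℝ}
    (hτ : ∀ s a, IsDist (τ s a)) (hμ0 : IsDist μ0) (hπ : IsPolicy π) :
    ∀ t s, 0 ≤ stateDist τ μ0 π t s
  | 0, s => hμ0.1 s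
  | (t+1), s' => Finset.sum_nonneg fun s _ => Finset.sum_nonneg fun a _ =>
      mul_nonneg (mul_nonneg (stateDist_nonneg hτ hμ0 hπ t s) ((hπ s).1 a)) ((hτ s a).1 s')

lemma row_sum_one {τ : S → A → S → ℝ} {π : S → A → ℝ}
    (hτ : ∀ s a, IsDist (τ s a)) (hπ : IsPolicy π) (d : S → ℝ) (s : S) :
    ∑ a, ∑ s', d s * π s a * τ s a s' = d s := by
  have h1 : ∀ a, ∑ s', d s * π s a * τ s a s' = d s * π s a := by
    intro a
    rw [← Finset.mul_sum, (hτ s a).2, mul_one]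
  simp_rw [h1, ← Finset.mul_sum, (hπ s).2, mul_one]

lemma stateDist_sum {τ : S → A → S → ℝ} {μ0 : S → ℝ} {π : S → A → ℝ}
    (hτ : ∀ s a, IsDist (τ s a)) (hμ0 : IsDist μ0) (hπ : IsPolicy π) :
    ∀ t, ∑ s, stateDist τ μ0 π t s = 1
  | 0 => hμ0.2
  | (t+1) => by
    have : ∑ s', stateDist τ μ0 π (t+1) s'
        = ∑ s', ∑ s, ∑ a, stateDist τ μ0 π t s * π s a * τ s a s' := rfl
    rw [this, Finset.sum_comm]
    have h2 : ∀ s, ∑ s', ∑ a, stateDist τ μ0 π t s * π s a * τ s a s'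
        = stateDist τ μ0 π t s := by
      intro s
      rw [Finset.sum_comm]
      exact row_sum_one hτ hπ _ s
    simp_rw [h2]
    exact stateDist_sum hτ hμ0 hπ t

/-- The transition distribution at time `t`. -/
noncomputable def qd (τ : S → A → S → ℝ) (μ0 : S → ℝ) (π : S → A → ℝ) (t : ℕ)
    (s : S) (a : A) (s' : S) : ℝ := stateDist τ μ0 π t s * π s a * τ s a s'

lemma qd_nonneg {τ : S → A → S → ℝ} {μ0 : S → ℝ} {π : S → A → ℝ}
    (hτ : ∀ s a, IsDist (τ s a)) (hμ0 : IsDist μ0) (hπ : IsPolicy π) (t : ℕ)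
    (s : S) (a : A) (s' : S) : 0 ≤ qd τ μ0 π t s a s' :=
  mul_nonneg (mul_nonneg (stateDist_nonneg hτ hμ0 hπ t s) ((hπ s).1 a)) ((hτ s a).1 s')

lemma qd_sum {τ : S → A → S → ℝ} {μ0 : S → ℝ} {π : S → A → ℝ}
    (hτ : ∀ s a, IsDist (τ s a)) (hμ0 : IsDist μ0) (hπ : IsPolicy π) (t : ℕ) :
    ∑ s, ∑ a, ∑ s', qd τ μ0 π t s a s' = 1 := by
  unfold qd
  simp_rw [row_sum_one hτ hπ (stateDist τ μ0 π t)]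
  exact stateDist_sum hτ hμ0 hπ t

/-- The time-`t` expectation appearing in `J`. -/
noncomputable def innerJ (τ : S → A → S → ℝ) (μ0 : S → ℝ) (π : S → A → ℝ)
    (R : Reward S A) (t : ℕ) : ℝ :=
  ∑ s, ∑ a, ∑ s', qd τ μ0 π t s a s' * R s a s'

lemma J_eq (τ : S → A → S → ℝ) (μ0 : S → ℝ) (γ : ℝ) (R : Reward S A) (π : S → A → ℝ) :
    J τ μ0 γ R π = ∑' t : ℕ, γ ^ t * innerJ τ μ0 π R t := rfl

lemma innerJ_abs_le {τ : S → A → S → ℝ} {μ0 : S → ℝ} {π : S → A → ℝ}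
    (hτ : ∀ s a, IsDist (τ s a)) (hμ0 : IsDist μ0) (hπ : IsPolicy π)
    {R : Reward S A} {B : ℝ} (hB : ∀ s a s', |R s a s'| ≤ B) (t : ℕ) :
    |innerJ τ μ0 π R t| ≤ B := by
  calc |innerJ τ μ0 π R t| ≤ ∑ s, ∑ a, ∑ s', |qd τ μ0 π t s a s' * R s a s'| :=
        abs_triple_sum_le
    _ ≤ ∑ s, ∑ a, ∑ s', qd τ μ0 π t s a s' * B := by
        refine Finset.sum_le_sum fun s _ => Finset.sum_le_sum fun a _ =>
          Finset.sum_le_sum fun s' _ => ?_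
        rw [abs_mul, abs_of_nonneg (qd_nonneg hτ hμ0 hπ t s a s')]
        exact mul_le_mul_of_nonneg_left (hB s a s') (qd_nonneg hτ hμ0 hπ t s a s')
    _ = B := by
        simp_rw [← Finset.sum_mul]
        rw [qd_sum hτ hμ0 hπ t, one_mul]

end Aux

section Aux2

variable {S A : Type*} [Fintype S] [Fintype A]

lemma summable_J {τ : S → A → S → ℝ} {μ0 : S → ℝ} {π : S → A → ℝ}
    (hτ : ∀ s a, IsDist (τ s a)) (hμ0 : IsDist μ0) (hπ : IsPolicy π)
    {γ : ℝ} (hγ : γ ∈ Set.Ioo (0 : ℝ) 1) (R : Reward S A) :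
    Summable (fun t => γ ^ t * innerJ τ μ0 π R t) := by
  set B : ℝ := ∑ s, ∑ a, ∑ s', |R s a s'| with hBdef
  have hB : ∀ s a s', |R s a s'| ≤ B :=
    fun s a s' => triple_le_sum (fun x y z => abs_nonneg _) s a s'
  have hg : Summable (fun t : ℕ => B * γ ^ t) :=
    (summable_geometric_of_lt_one hγ.1.le hγ.2).mul_left B
  refine Summable.of_norm_bounded hg fun t => ?_
  rw [Real.norm_eq_abs, abs_mul, abs_pow, abs_of_pos hγ.1, mul_comm]
  exact mul_le_mul_of_nonneg_right (innerJ_abs_le hτ hμ0 hπ hB t)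
    (pow_nonneg hγ.1.le t)

lemma J_abs_le {τ : S → A → S → ℝ} {μ0 : S → ℝ} {π : S → A → ℝ}
    (hτ : ∀ s a, IsDist (τ s a)) (hμ0 : IsDist μ0) (hπ : IsPolicy π)
    {γ : ℝ} (hγ : γ ∈ Set.Ioo (0 : ℝ) 1) {R : Reward S A} {B : ℝ}
    (hB : ∀ s a s', |R s a s'| ≤ B) :
    |J τ μ0 γ R π| ≤ B * (1 - γ)⁻¹ := by
  rw [J_eq]
  have hs := summable_J hτ hμ0 hπ hγ R
  have habs : Summable (fun t => ‖γ ^ t * innerJ τ μ0 π R t‖) := hs.norm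
  have habs' : Summable (fun t => γ ^ t * |innerJ τ μ0 π R t|) := by
    simpa [Real.norm_eq_abs, abs_mul, abs_pow, abs_of_pos hγ.1] using habs
  have hg : Summable (fun t : ℕ => B * γ ^ t) :=
    (summable_geometric_of_lt_one hγ.1.le hγ.2).mul_left B
  calc |∑' t : ℕ, γ ^ t * innerJ τ μ0 π R t|
      ≤ ∑' t : ℕ, γ ^ t * |innerJ τ μ0 π R t| := by
        have := norm_tsum_le_tsum_norm habs
        simpa [Real.norm_eq_abs, abs_mul, abs_pow, abs_of_pos hγ.1] using this
    _ ≤ ∑' t : ℕ, B * γ ^ t := by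
        refine Summable.tsum_le_tsum (fun t => ?_) habs' hg
        rw [mul_comm B]
        exact mul_le_mul_of_nonneg_left (innerJ_abs_le hτ hμ0 hπ hB t)
          (pow_nonneg hγ.1.le t)
    _ = B * (1 - γ)⁻¹ := by
        rw [tsum_mul_left, tsum_geometric_of_lt_one hγ.1.le hγ.2]

lemma innerJ_add (τ : S → A → S → ℝ) (μ0 : S → ℝ) (π : S → A → ℝ)
    (f g : Reward S A) (t : ℕ) :
    innerJ τ μ0 π (fun s a s' => f s a s' + g s a s') t
      = innerJ τ μ0 π f t + innerJ τ μ0 π g t := by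
  unfold innerJ
  simp [mul_add, Finset.sum_add_distrib]

lemma innerJ_smul (τ : S → A → S → ℝ) (μ0 : S → ℝ) (π : S → A → ℝ)
    (c : ℝ) (g : Reward S A) (t : ℕ) :
    innerJ τ μ0 π (fun s a s' => c * g s a s') t = c * innerJ τ μ0 π g t := by
  unfold innerJ
  simp [Finset.mul_sum]
  congr 1; ext s; congr 1; ext a; congr 1; ext s'; ring

lemma J_add {τ : S → A → S → ℝ} {μ0 : S → ℝ} {π : S → A → ℝ}
    (hτ : ∀ s a, IsDist (τ s a)) (hμ0 : IsDist μ0) (hπ : IsPolicy π)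
    {γ : ℝ} (hγ : γ ∈ Set.Ioo (0 : ℝ) 1) (f g : Reward S A) :
    J τ μ0 γ (fun s a s' => f s a s' + g s a s') π = J τ μ0 γ f π + J τ μ0 γ g π := by
  rw [J_eq, J_eq, J_eq]
  simp_rw [innerJ_add, mul_add]
  exact Summable.tsum_add (summable_J hτ hμ0 hπ hγ f) (summable_J hτ hμ0 hπ hγ g)

lemma J_smul (τ : S → A → S → ℝ) (μ0 : S → ℝ) (π : S → A → ℝ)
    (γ : ℝ) (c : ℝ) (g : Reward S A) :
    J τ μ0 γ (fun s a s' => c * g s a s') π = c * J τ μ0 γ g π := by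
  rw [J_eq, J_eq]
  simp_rw [innerJ_smul]
  rw [← tsum_mul_left]
  congr 1; ext t; ring

lemma J_const {τ : S → A → S → ℝ} {μ0 : S → ℝ} {π : S → A → ℝ}
    (hτ : ∀ s a, IsDist (τ s a)) (hμ0 : IsDist μ0) (hπ : IsPolicy π)
    {γ : ℝ} (hγ : γ ∈ Set.Ioo (0 : ℝ) 1) (c : ℝ) :
    J τ μ0 γ (fun _ _ _ => c) π = c * (1 - γ)⁻¹ := by
  rw [J_eq]
  have h1 : ∀ t, innerJ τ μ0 π (fun _ _ _ => c) t = c := by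
    intro t
    unfold innerJ
    simp_rw [← Finset.sum_mul]
    rw [qd_sum hτ hμ0 hπ t, one_mul]
  simp_rw [h1]
  rw [show (fun t : ℕ => γ ^ t * c) = (fun t : ℕ => c * γ ^ t) by ext t; ring,
    tsum_mul_left, tsum_geometric_of_lt_one hγ.1.le hγ.2]

end Aux2

section Aux3

variable {S A : Type*} [Fintype S] [Fintype A]

lemma J_shaping {τ : S → A → S → ℝ} {μ0 : S → ℝ} {π : S → A → ℝ}
    (hτ : ∀ s a, IsDist (τ s a)) (hμ0 : IsDist μ0) (hπ : IsPolicy π)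
    {γ : ℝ} (hγ : γ ∈ Set.Ioo (0 : ℝ) 1) (Φ : S → ℝ) :
    J τ μ0 γ (fun s _ s' => γ * Φ s' - Φ s) π = -∑ s, μ0 s * Φ s := by
  set E : ℕ → ℝ := fun t => ∑ s, stateDist τ μ0 π t s * Φ s with hE
  have hinner : ∀ t, innerJ τ μ0 π (fun s _ s' => γ * Φ s' - Φ s) t
      = γ * E (t + 1) - E t := by
    intro t
    have hsplit : ∀ s a s', qd τ μ0 π t s a s' * (γ * Φ s' - Φ s)
        = γ * (qd τ μ0 π t s a s' * Φ s') - qd τ μ0 π t s a s' * Φ s :=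
      fun s a s' => by ring
    unfold innerJ
    simp_rw [hsplit, Finset.sum_sub_distrib, ← Finset.mul_sum]
    congr 1
    · -- γ * ∑∑∑ q Φ s' = γ * E (t+1)
      congr 1
      calc ∑ s, ∑ a, ∑ s', qd τ μ0 π t s a s' * Φ s'
          = ∑ s, ∑ s', ∑ a, qd τ μ0 π t s a s' * Φ s' :=
            Finset.sum_congr rfl fun s _ => Finset.sum_comm
        _ = ∑ s', ∑ s, ∑ a, qd τ μ0 π t s a s' * Φ s' := Finset.sum_comm
        _ = ∑ s', (∑ s, ∑ a, qd τ μ0 π t s a s') * Φ s' := by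
            simp_rw [← Finset.sum_mul]
        _ = E (t + 1) := by
            refine Finset.sum_congr rfl fun s' _ => ?_
            rfl
    · -- ∑∑∑ q Φ s = E t
      calc ∑ s, ∑ a, ∑ s', qd τ μ0 π t s a s' * Φ s
          = ∑ s, (∑ a, ∑ s', qd τ μ0 π t s a s') * Φ s := by
            simp_rw [← Finset.sum_mul]
        _ = E t := by
            refine Finset.sum_congr rfl fun s _ => ?_
            rw [show (∑ a, ∑ s', qd τ μ0 π t s a s') = stateDist τ μ0 π t s from
              row_sum_one hτ hπ _ s]
  set b : ℕ → ℝ := fun t => γ ^ t * E t with hb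
  have hEb : ∃ BΦ : ℝ, ∀ t, |E t| ≤ BΦ := by
    refine ⟨∑ s, |Φ s|, fun t => ?_⟩
    calc |E t| ≤ ∑ s, |stateDist τ μ0 π t s * Φ s| := Finset.abs_sum_le_sum_abs _ _
      _ ≤ ∑ s, |Φ s| := by
          refine Finset.sum_le_sum fun s _ => ?_
          rw [abs_mul, abs_of_nonneg (stateDist_nonneg hτ hμ0 hπ t s)]
          have hle1 : stateDist τ μ0 π t s ≤ 1 := by
            have := Finset.single_le_sum
              (f := fun s => stateDist τ μ0 π t s)
              (fun x _ => stateDist_nonneg hτ hμ0 hπ t x) (Finset.mem_univ s)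
            rw [stateDist_sum hτ hμ0 hπ t] at this
            exact this
          nlinarith [abs_nonneg (Φ s)]
  obtain ⟨BΦ, hBΦ⟩ := hEb
  have hbsum : Summable b := by
    have hg : Summable (fun t : ℕ => BΦ * γ ^ t) :=
      (summable_geometric_of_lt_one hγ.1.le hγ.2).mul_left BΦ
    refine Summable.of_norm_bounded hg fun t => ?_
    rw [Real.norm_eq_abs, hb]
    simp only
    rw [abs_mul, abs_pow, abs_of_pos hγ.1, mul_comm]
    exact mul_le_mul_of_nonneg_right (hBΦ t) (pow_nonneg hγ.1.le t)
  have hbsum1 : Summable (fun t => b (t + 1)) := (summable_nat_add_iff 1).2 hbsum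
  have hterm : ∀ t, γ ^ t * innerJ τ μ0 π (fun s _ s' => γ * Φ s' - Φ s) t
      = b (t + 1) - b t := by
    intro t
    rw [hinner t, hb]
    simp only
    rw [pow_succ]
    ring
  rw [J_eq]
  simp_rw [hterm]
  rw [Summable.tsum_sub hbsum1 hbsum]
  have hshift := Summable.tsum_eq_zero_add hbsum
  have hb0 : b 0 = ∑ s, μ0 s * Φ s := by
    rw [hb]; simp only [pow_zero, one_mul]; rfl
  rw [hshift]
  rw [hb0]
  ring

lemma J_CEpic_diff {τ : S → A → S → ℝ} {μ0 : S → ℝ}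
    (hτ : ∀ s a, IsDist (τ s a)) (hμ0 : IsDist μ0)
    {γ : ℝ} (hγ : γ ∈ Set.Ioo (0 : ℝ) 1)
    (DS : S → ℝ) (DA : A → ℝ) (R : Reward S A)
    {π1 π2 : S → A → ℝ} (hπ1 : IsPolicy π1) (hπ2 : IsPolicy π2) :
    J τ μ0 γ (CEpic DS DA γ R) π1 - J τ μ0 γ (CEpic DS DA γ R) π2
      = J τ μ0 γ R π1 - J τ μ0 γ R π2 := by
  set Φ : S → ℝ := fun x => ∑ a', ∑ σ', DA a' * DS σ' * R x a' σ' with hΦ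
  set m : ℝ := ∑ σ, ∑ a', ∑ σ', DS σ * DA a' * DS σ' * R σ a' σ' with hm
  have hC : CEpic DS DA γ R = fun s a s' =>
      R s a s' + ((γ * Φ s' - Φ s) + (fun _ _ _ => -(γ * m)) s a s') := by
    funext s a s'
    simp only [CEpic, hΦ, hm]
    ring
  have key : ∀ (π : S → A → ℝ), IsPolicy π →
      J τ μ0 γ (CEpic DS DA γ R) π
        = J τ μ0 γ R π + ((-∑ s, μ0 s * Φ s) + (-(γ * m)) * (1 - γ)⁻¹) := by
    intro π hπ
    rw [hC]
    rw [show (fun s a s' => R s a s' + ((γ * Φ s' - Φ s) + (fun _ _ _ => -(γ * m)) s a s'))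
        = (fun s a s' => R s a s' + ((fun x y z => (γ * Φ z - Φ x) + (-(γ * m))) s a s')) from rfl]
    rw [J_add hτ hμ0 hπ hγ R (fun x y z => (γ * Φ z - Φ x) + (-(γ * m)))]
    rw [show (fun x y z => (γ * Φ z - Φ x) + (-(γ * m)))
        = (fun x y z => (fun s _ s' => γ * Φ s' - Φ s) x y z + (fun _ _ _ => -(γ * m)) x y z) from rfl]
    rw [J_add hτ hμ0 hπ hγ _ _]
    rw [J_shaping hτ hμ0 hπ hγ Φ, J_const hτ hμ0 hπ hγ]
  rw [key π1 hπ1, key π2 hπ2]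
  ring

end Aux3

section Aux4

variable {S A : Type*} [Fintype S] [Fintype A]

/-- The D-weighted inner product on reward space. -/
noncomputable def ipD (DS : S → ℝ) (DA : A → ℝ) (f g : Reward S A) : ℝ :=
  ∑ s, ∑ a, ∑ s', DS s * DA a * DS s' * f s a s' * g s a s'

lemma sum3_weights {DS : S → ℝ} {DA : A → ℝ}
    (hDS : ∑ s, DS s = 1) (hDA : ∑ a, DA a = 1) :
    ∑ s : S, ∑ a : A, ∑ s' : S, DS s * DA a * DS s' = 1 := by
  have h1 : ∀ (s : S) (a : A), ∑ s', DS s * DA a * DS s' = DS s * DA a := by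
    intro s a; rw [← Finset.mul_sum, hDS, mul_one]
  have h2 : ∀ s : S, ∑ a, DS s * DA a = DS s := by
    intro s; rw [← Finset.mul_sum, hDA, mul_one]
  simp_rw [h1, h2]
  exact hDS

lemma expect3_third {DS : S → ℝ} {DA : A → ℝ}
    (hDS : ∑ s, DS s = 1) (hDA : ∑ a, DA a = 1) (φ : S → ℝ) :
    ∑ s : S, ∑ a : A, ∑ s' : S, DS s * DA a * DS s' * φ s' = ∑ x, DS x * φ x := by
  have h1 : ∀ s a, ∑ s', DS s * DA a * DS s' * φ s'
      = DS s * DA a * ∑ x, DS x * φ x := by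
    intro s a; rw [Finset.mul_sum]; exact Finset.sum_congr rfl fun x _ => by ring
  simp_rw [h1]
  have h2 : ∀ s : S, ∑ a, DS s * DA a * (∑ x, DS x * φ x)
      = DS s * ∑ x, DS x * φ x := by
    intro s
    rw [show (∑ a, DS s * DA a * (∑ x, DS x * φ x))
        = (∑ a, DA a) * (DS s * ∑ x, DS x * φ x) from by
      rw [Finset.sum_mul]; exact Finset.sum_congr rfl fun a _ => by ring]
    rw [hDA, one_mul]
  simp_rw [h2, ← Finset.sum_mul, hDS, one_mul]

lemma expect3_first {DS : S → ℝ} {DA : A → ℝ}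
    (hDS : ∑ s, DS s = 1) (hDA : ∑ a, DA a = 1) (φ : S → ℝ) :
    ∑ s : S, ∑ a : A, ∑ s' : S, DS s * DA a * DS s' * φ s = ∑ x, DS x * φ x := by
  have h1 : ∀ s a, ∑ s', DS s * DA a * DS s' * φ s = DA a * (DS s * φ s) := by
    intro s a
    rw [show (∑ s', DS s * DA a * DS s' * φ s)
        = (∑ s', DS s') * (DA a * (DS s * φ s)) from by
      rw [Finset.sum_mul]; exact Finset.sum_congr rfl fun x _ => by ring]
    rw [hDS, one_mul]
  simp_rw [h1, ← Finset.sum_mul, hDA, one_mul]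

lemma meanD_CEpic_zero {DS : S → ℝ} {DA : A → ℝ}
    (hDS : ∑ s, DS s = 1) (hDA : ∑ a, DA a = 1) (γ : ℝ) (R : Reward S A) :
    meanD DS DA (CEpic DS DA γ R) = 0 := by
  set P : S → ℝ := fun x => ∑ a', ∑ σ', DA a' * DS σ' * R x a' σ' with hP
  set m : ℝ := ∑ σ, ∑ a', ∑ σ', DS σ * DA a' * DS σ' * R σ a' σ' with hm
  have hexp : ∀ s a s', DS s * DA a * DS s' * CEpic DS DA γ R s a s'
      = DS s * DA a * DS s' * R s a s'
        + γ * (DS s * DA a * DS s' * P s')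
        - DS s * DA a * DS s' * P s
        - γ * (DS s * DA a * DS s' * m) := by
    intro s a s'
    simp only [CEpic, hP, hm]
    ring
  have hM : (∑ x, DS x * P x) = m := by
    rw [hm, hP]
    refine Finset.sum_congr rfl fun x _ => ?_
    rw [Finset.mul_sum]
    refine Finset.sum_congr rfl fun a' _ => ?_
    rw [Finset.mul_sum]
    refine Finset.sum_congr rfl fun σ' _ => by ring
  have hT1 : (∑ s : S, ∑ a : A, ∑ s' : S, DS s * DA a * DS s' * R s a s') = m := rfl
  unfold meanD
  simp_rw [hexp, Finset.sum_sub_distrib, Finset.sum_add_distrib, ← Finset.mul_sum]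
  rw [hT1, expect3_third hDS hDA P, expect3_first hDS hDA P, hM]
  have hw : (∑ s : S, ∑ a : A, ∑ s' : S, DS s * DA a * DS s' * m)
      = m := by
    simp_rw [← Finset.sum_mul]
    rw [sum3_weights hDS hDA, one_mul]
  rw [hw]
  ring

lemma covD_eq_ipD {DS : S → ℝ} {DA : A → ℝ} {f g : Reward S A}
    (hf : meanD DS DA f = 0) (hg : meanD DS DA g = 0) :
    covD DS DA f g = ipD DS DA f g := by
  unfold covD ipD
  simp_rw [hf, hg, sub_zero]

lemma ipD_self_nonneg (DS : S → ℝ) (DA : A → ℝ)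
    (hDS : ∀ s, 0 ≤ DS s) (hDA : ∀ a, 0 ≤ DA a) (f : Reward S A) :
    0 ≤ ipD DS DA f f := by
  refine Finset.sum_nonneg fun s _ => Finset.sum_nonneg fun a _ =>
    Finset.sum_nonneg fun s' _ => ?_
  calc (0:ℝ) ≤ (DS s * DA a * DS s') * (f s a s' * f s a s') :=
        mul_nonneg (mul_nonneg (mul_nonneg (hDS s) (hDA a)) (hDS s'))
          (mul_self_nonneg _)
    _ = DS s * DA a * DS s' * f s a s' * f s a s' := by ring

lemma ipD_expand (DS : S → ℝ) (DA : A → ℝ) (f g : Reward S A) (c : ℝ) :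
    ipD DS DA (fun s a s' => f s a s' - c * g s a s')
        (fun s a s' => f s a s' - c * g s a s')
      = ipD DS DA f f - 2 * c * ipD DS DA f g + c ^ 2 * ipD DS DA g g := by
  unfold ipD
  have h : ∀ s a s', DS s * DA a * DS s' * (f s a s' - c * g s a s')
        * (f s a s' - c * g s a s')
      = DS s * DA a * DS s' * f s a s' * f s a s'
        - 2 * c * (DS s * DA a * DS s' * f s a s' * g s a s')
        + c ^ 2 * (DS s * DA a * DS s' * g s a s' * g s a s') :=
    fun s a s' => by ring
  simp_rw [h, Finset.sum_add_distrib, Finset.sum_sub_distrib, ← Finset.mul_sum]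

lemma ipD_term_le (DS : S → ℝ) (DA : A → ℝ)
    (hDS : ∀ s, 0 ≤ DS s) (hDA : ∀ a, 0 ≤ DA a) (f : Reward S A)
    (s : S) (a : A) (s' : S) :
    DS s * DA a * DS s' * (f s a s')^2 ≤ ipD DS DA f f := by
  have h := triple_le_sum
    (f := fun x y z => DS x * DA y * DS z * f x y z * f x y z)
    (fun x y z => by
      calc (0:ℝ) ≤ (DS x * DA y * DS z) * (f x y z * f x y z) :=
            mul_nonneg (mul_nonneg (mul_nonneg (hDS x) (hDA y)) (hDS z))
              (mul_self_nonneg _)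
        _ = DS x * DA y * DS z * f x y z * f x y z := by ring) s a s'
  calc DS s * DA a * DS s' * (f s a s')^2
      = DS s * DA a * DS s' * f s a s' * f s a s' := by ring
    _ ≤ ipD DS DA f f := h

end Aux4

section Aux5

variable {S A : Type*} [Fintype S] [Fintype A]

lemma abs_le_l2Norm (R : Reward S A) (s : S) (a : A) (s' : S) :
    |R s a s'| ≤ l2Norm R := by
  rw [← Real.sqrt_sq_eq_abs]
  exact Real.sqrt_le_sqrt
    (triple_le_sum (f := fun x y z => (R x y z) ^ 2) (fun x y z => sq_nonneg _) s a s')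

lemma CEpic_abs_le {DS : S → ℝ} {DA : A → ℝ} (hDS : IsDist DS) (hDA : IsDist DA)
    {γ : ℝ} (hγ0 : 0 ≤ γ) (hγ1 : γ ≤ 1) {R : Reward S A} {L : ℝ}
    (hL : ∀ s a s', |R s a s'| ≤ L) (s : S) (a : A) (s' : S) :
    |CEpic DS DA γ R s a s'| ≤ 4 * L := by
  have hL0 : 0 ≤ L := le_trans (abs_nonneg _) (hL s a s')
  set P : S → ℝ := fun x => ∑ a', ∑ σ', DA a' * DS σ' * R x a' σ' with hPdef
  set mm : ℝ := ∑ σ, ∑ a', ∑ σ', DS σ * DA a' * DS σ' * R σ a' σ' with hmdef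
  have hP : ∀ x, |P x| ≤ L := by
    intro x
    have hrow : ∀ a', |∑ σ', DA a' * DS σ' * R x a' σ'| ≤ DA a' * L := by
      intro a'
      calc |∑ σ', DA a' * DS σ' * R x a' σ'|
          ≤ ∑ σ', |DA a' * DS σ' * R x a' σ'| := Finset.abs_sum_le_sum_abs _ _
        _ ≤ ∑ σ', DA a' * L * DS σ' := by
            refine Finset.sum_le_sum fun σ' _ => ?_
            rw [abs_mul, abs_mul, abs_of_nonneg (hDA.1 a'), abs_of_nonneg (hDS.1 σ')]
            calc DA a' * DS σ' * |R x a' σ'| ≤ DA a' * DS σ' * L :=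
                  mul_le_mul_of_nonneg_left (hL x a' σ')
                    (mul_nonneg (hDA.1 a') (hDS.1 σ'))
              _ = DA a' * L * DS σ' := by ring
        _ = DA a' * L := by rw [← Finset.mul_sum, hDS.2, mul_one]
    calc |P x| ≤ ∑ a', |∑ σ', DA a' * DS σ' * R x a' σ'| := Finset.abs_sum_le_sum_abs _ _
      _ ≤ ∑ a', DA a' * L := Finset.sum_le_sum fun a' _ => hrow a'
      _ = L := by rw [← Finset.sum_mul, hDA.2, one_mul]
  have hm : |mm| ≤ L := by
    calc |mm| ≤ ∑ σ, ∑ a', ∑ σ', |DS σ * DA a' * DS σ' * R σ a' σ'| := abs_triple_sum_le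
      _ ≤ ∑ σ, ∑ a', ∑ σ', DS σ * DA a' * DS σ' * L := by
          refine Finset.sum_le_sum fun σ _ => Finset.sum_le_sum fun a' _ =>
            Finset.sum_le_sum fun σ' _ => ?_
          rw [abs_mul, abs_mul, abs_mul, abs_of_nonneg (hDS.1 σ),
            abs_of_nonneg (hDA.1 a'), abs_of_nonneg (hDS.1 σ')]
          exact mul_le_mul_of_nonneg_left (hL σ a' σ')
            (mul_nonneg (mul_nonneg (hDS.1 σ) (hDA.1 a')) (hDS.1 σ'))
      _ = L := by
          simp_rw [← Finset.sum_mul]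
          rw [sum3_weights hDS.2 hDA.2, one_mul]
  have hC : CEpic DS DA γ R s a s' = R s a s' + γ * P s' - P s - γ * mm := rfl
  rw [hC, abs_le]
  have h1 := abs_le.mp (hL s a s')
  have h2 := abs_le.mp (hP s')
  have h3 := abs_le.mp (hP s)
  have h4 := abs_le.mp hm
  have h5 : γ * P s' ≤ γ * L := mul_le_mul_of_nonneg_left h2.2 hγ0
  have h6 : γ * (-L) ≤ γ * P s' := mul_le_mul_of_nonneg_left h2.1 hγ0
  have h7 : γ * mm ≤ γ * L := mul_le_mul_of_nonneg_left h4.2 hγ0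
  have h8 : γ * (-L) ≤ γ * mm := mul_le_mul_of_nonneg_left h4.1 hγ0
  have h9 : γ * L ≤ 1 * L := mul_le_mul_of_nonneg_right hγ1 hL0
  constructor <;> nlinarith

lemma ipD_le_sq {DS : S → ℝ} {DA : A → ℝ} (hDS : IsDist DS) (hDA : IsDist DA)
    {f : Reward S A} {B : ℝ} (hB : ∀ s a s', |f s a s'| ≤ B) :
    ipD DS DA f f ≤ B ^ 2 := by
  have step : ∀ (s : S) (a : A) (s' : S),
      DS s * DA a * DS s' * f s a s' * f s a s' ≤ DS s * DA a * DS s' * B ^ 2 := by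
    intro s a s'
    have hab := abs_le.mp (hB s a s')
    have h1 : f s a s' * f s a s' ≤ B ^ 2 := by nlinarith
    have hw : 0 ≤ DS s * DA a * DS s' :=
      mul_nonneg (mul_nonneg (hDS.1 s) (hDA.1 a)) (hDS.1 s')
    calc DS s * DA a * DS s' * f s a s' * f s a s'
        = (DS s * DA a * DS s') * (f s a s' * f s a s') := by ring
      _ ≤ (DS s * DA a * DS s') * B ^ 2 := mul_le_mul_of_nonneg_left h1 hw
  calc ipD DS DA f f ≤ ∑ s, ∑ a, ∑ s', DS s * DA a * DS s' * B ^ 2 :=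
        Finset.sum_le_sum fun s _ => Finset.sum_le_sum fun a _ =>
          Finset.sum_le_sum fun s' _ => step s a s'
    _ = B ^ 2 := by
        simp_rw [← Finset.sum_mul]
        rw [sum3_weights hDS.2 hDA.2, one_mul]

end Aux5

/-- generalised EPIC regret bound. -/
theorem epic_generalised_regret_bound
    {S A : Type*} [Fintype S] [Fintype A] [Nonempty S] [Nonempty A]
    (γ : ℝ) (hγ : γ ∈ Set.Ioo (0 : ℝ) 1)
    (DS : S → ℝ) (hDS : IsDist DS) (hDSpos : ∀ s, 0 < DS s)
    (DA : A → ℝ) (hDA : IsDist DA) (hDApos : ∀ a, 0 < DA a) :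
    ∃ U : ℝ, 0 < U ∧
      ∀ (τ : S → A → S → ℝ), (∀ s a, IsDist (τ s a)) →
      ∀ (μ0 : S → ℝ), IsDist μ0 →
      ∀ R1 R2 : Reward S A,
        varD DS DA (CEpic DS DA γ R1) ≠ 0 →
        varD DS DA (CEpic DS DA γ R2) ≠ 0 →
        ∀ π1 π2 : Policy S A,
          J τ μ0 γ R2 π1.1 ≤ J τ μ0 γ R2 π2.1 →
          J τ μ0 γ R1 π1.1 - J τ μ0 γ R1 π2.1 ≤
            U * l2Norm R1 * DEpic DS DA γ R1 R2 := by
  classical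
  have hne : (Finset.univ : Finset (S × A × S)).Nonempty := Finset.univ_nonempty
  set wmin : ℝ := (Finset.univ : Finset (S × A × S)).inf'
      hne (fun x => DS x.1 * DA x.2.1 * DS x.2.2) with hwmin
  have hwminpos : 0 < wmin := by
    rw [hwmin, Finset.lt_inf'_iff]
    exact fun x _ => mul_pos (mul_pos (hDSpos x.1) (hDApos x.2.1)) (hDSpos x.2.2)
  have hwle : ∀ (s : S) (a : A) (s' : S), wmin ≤ DS s * DA a * DS s' := fun s a s' =>
    Finset.inf'_le _ (Finset.mem_univ (⟨s, a, s'⟩ : S × A × S))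
  have h1γ : (0:ℝ) < 1 - γ := by linarith [hγ.2]
  have hwsq : 0 < Real.sqrt wmin := Real.sqrt_pos.mpr hwminpos
  refine ⟨16 * (1 - γ)⁻¹ * (Real.sqrt wmin)⁻¹, by positivity, ?_⟩
  intro τ hτ μ0 hμ0 R1 R2 hvar1 hvar2 π1 π2 hJ2
  set C1 := CEpic DS DA γ R1 with hC1
  set C2 := CEpic DS DA γ R2 with hC2
  have hz1 : meanD DS DA C1 = 0 := meanD_CEpic_zero hDS.2 hDA.2 γ R1
  have hz2 : meanD DS DA C2 = 0 := meanD_CEpic_zero hDS.2 hDA.2 γ R2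
  have hv1 : varD DS DA C1 = ipD DS DA C1 C1 := covD_eq_ipD hz1 hz1
  have hv2 : varD DS DA C2 = ipD DS DA C2 C2 := covD_eq_ipD hz2 hz2
  set ip11 := ipD DS DA C1 C1 with hip11
  set ip22 := ipD DS DA C2 C2 with hip22
  set ip12 := ipD DS DA C1 C2 with hip12
  have hDSnn : ∀ s, 0 ≤ DS s := fun s => (hDSpos s).le
  have hDAnn : ∀ a, 0 ≤ DA a := fun a => (hDApos a).le
  have h11nn : 0 ≤ ip11 := ipD_self_nonneg DS DA hDSnn hDAnn C1
  have h22nn : 0 ≤ ip22 := ipD_self_nonneg DS DA hDSnn hDAnn C2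
  have h11ne : ip11 ≠ 0 := fun h => hvar1 (by rw [hv1, h])
  have h22ne : ip22 ≠ 0 := fun h => hvar2 (by rw [hv2, h])
  have h11pos : 0 < ip11 := h11nn.lt_of_ne (Ne.symm h11ne)
  have h22pos : 0 < ip22 := h22nn.lt_of_ne (Ne.symm h22ne)
  set n1 := Real.sqrt ip11 with hn1
  set n2 := Real.sqrt ip22 with hn2
  have hn1pos : 0 < n1 := Real.sqrt_pos.mpr h11pos
  have hn2pos : 0 < n2 := Real.sqrt_pos.mpr h22pos
  have hn1sq : n1 ^ 2 = ip11 := Real.sq_sqrt h11nn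
  have hn2sq : n2 ^ 2 = ip22 := Real.sq_sqrt h22nn
  set c := n1 / n2 with hc
  have hcpos : 0 < c := div_pos hn1pos hn2pos
  set G : Reward S A := fun s a s' => C1 s a s' - c * C2 s a s' with hG
  have hGG : ipD DS DA G G = ip11 - 2 * c * ip12 + c ^ 2 * ip22 :=
    ipD_expand DS DA C1 C2 c
  set ρ := pearsonD DS DA C1 C2 with hρ
  have hρeq : ρ = ip12 / (n1 * n2) := by
    rw [hρ]
    unfold pearsonD
    rw [covD_eq_ipD hz1 hz2, hv1, hv2, ← hn1, ← hn2]
  have hGGval : ipD DS DA G G = 4 * n1 ^ 2 * ((1 - ρ) / 2) := by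
    rw [hGG, hρeq, hc, ← hn1sq, ← hn2sq]
    field_simp
    ring
  have hGGnn : 0 ≤ ipD DS DA G G := ipD_self_nonneg DS DA hDSnn hDAnn G
  have h1ρ : 0 ≤ (1 - ρ) / 2 := by
    have h0 : 0 ≤ 4 * n1 ^ 2 * ((1 - ρ) / 2) := hGGval ▸ hGGnn
    nlinarith [h0, mul_pos hn1pos hn1pos]
  set D := Real.sqrt ((1 - ρ) / 2) with hD
  have hDnn : 0 ≤ D := Real.sqrt_nonneg _
  have hDE : DEpic DS DA γ R1 R2 = D := by
    rw [hD, hρ, hC1, hC2]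
    rfl
  have hsqrtGG : Real.sqrt (ipD DS DA G G) = 2 * n1 * D := by
    rw [hGGval, show 4 * n1 ^ 2 = (2 * n1) ^ 2 from by ring,
      Real.sqrt_mul (sq_nonneg (2 * n1)) ((1 - ρ) / 2),
      Real.sqrt_sq (by positivity : (0:ℝ) ≤ 2 * n1), hD]
  set BG := Real.sqrt (ipD DS DA G G) / Real.sqrt wmin with hBG
  have hGle : ∀ (s : S) (a : A) (s' : S), |G s a s'| ≤ BG := by
    intro s a s'
    have hterm := ipD_term_le DS DA hDSnn hDAnn G s a s'
    have hle : wmin * (G s a s') ^ 2 ≤ ipD DS DA G G :=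
      le_trans (mul_le_mul_of_nonneg_right (hwle s a s') (sq_nonneg _)) hterm
    have hq : (G s a s') ^ 2 ≤ ipD DS DA G G / wmin := by
      rw [le_div_iff₀ hwminpos, mul_comm]
      exact hle
    calc |G s a s'| = Real.sqrt ((G s a s') ^ 2) := (Real.sqrt_sq_eq_abs _).symm
      _ ≤ Real.sqrt (ipD DS DA G G / wmin) := Real.sqrt_le_sqrt hq
      _ = BG := by rw [hBG, Real.sqrt_div hGGnn]
  set L := l2Norm R1 with hL
  have hLnn : 0 ≤ L := Real.sqrt_nonneg _
  have hRL : ∀ (s : S) (a : A) (s' : S), |R1 s a s'| ≤ L := fun s a s' =>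
    abs_le_l2Norm R1 s a s'
  have hC1B : ∀ (s : S) (a : A) (s' : S), |C1 s a s'| ≤ 4 * L := by
    intro s a s'
    rw [hC1]
    exact CEpic_abs_le hDS hDA hγ.1.le hγ.2.le hRL s a s'
  have hip11le : ip11 ≤ (4 * L) ^ 2 := by
    rw [hip11]
    exact ipD_le_sq hDS hDA hC1B
  have hn1le : n1 ≤ 4 * L := by
    rw [hn1]
    calc Real.sqrt ip11 ≤ Real.sqrt ((4 * L) ^ 2) := Real.sqrt_le_sqrt hip11le
      _ = 4 * L := Real.sqrt_sq (by positivity)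
  have hlin : ∀ π : S → A → ℝ, IsPolicy π →
      J τ μ0 γ C1 π = J τ μ0 γ G π + c * J τ μ0 γ C2 π := by
    intro π hπ
    have hfun : C1 = fun s a s' => G s a s' + (fun x y z => c * C2 x y z) s a s' := by
      funext s a s'
      simp only [hG]
      ring
    calc J τ μ0 γ C1 π
        = J τ μ0 γ (fun s a s' => G s a s' + (fun x y z => c * C2 x y z) s a s') π := by
          rw [hfun]
      _ = J τ μ0 γ G π + J τ μ0 γ (fun x y z => c * C2 x y z) π := J_add hτ hμ0 hπ hγ _ _
      _ = J τ μ0 γ G π + c * J τ μ0 γ C2 π := by rw [J_smul]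
  have hdiff1 : J τ μ0 γ R1 π1.1 - J τ μ0 γ R1 π2.1
      = J τ μ0 γ C1 π1.1 - J τ μ0 γ C1 π2.1 := by
    rw [hC1]
    exact (J_CEpic_diff hτ hμ0 hγ DS DA R1 π1.2 π2.2).symm
  have hdiff2 : J τ μ0 γ C2 π1.1 - J τ μ0 γ C2 π2.1
      = J τ μ0 γ R2 π1.1 - J τ μ0 γ R2 π2.1 := by
    rw [hC2]
    exact J_CEpic_diff hτ hμ0 hγ DS DA R2 π1.2 π2.2
  have hJG1 : |J τ μ0 γ G π1.1| ≤ BG * (1 - γ)⁻¹ := J_abs_le hτ hμ0 π1.2 hγ hGle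
  have hJG2 : |J τ μ0 γ G π2.1| ≤ BG * (1 - γ)⁻¹ := J_abs_le hτ hμ0 π2.2 hγ hGle
  have hC2le : J τ μ0 γ C2 π1.1 - J τ μ0 γ C2 π2.1 ≤ 0 := by
    rw [hdiff2]
    linarith [hJ2]
  clear_value wmin C1 C2 ip11 ip22 ip12 n1 n2 c G ρ D BG L
  have hmain : J τ μ0 γ R1 π1.1 - J τ μ0 γ R1 π2.1 ≤ 2 * (BG * (1 - γ)⁻¹) := by
    rw [hdiff1, hlin π1.1 π1.2, hlin π2.1 π2.2]
    have habs1 := abs_le.mp hJG1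
    have habs2 := abs_le.mp hJG2
    have hprod : c * (J τ μ0 γ C2 π1.1 - J τ μ0 γ C2 π2.1) ≤ 0 := by
      have h := mul_le_mul_of_nonneg_left hC2le hcpos.le
      simpa using h
    have hexp : c * (J τ μ0 γ C2 π1.1 - J τ μ0 γ C2 π2.1)
        = c * J τ μ0 γ C2 π1.1 - c * J τ μ0 γ C2 π2.1 := by ring
    linarith [habs1.1, habs1.2, habs2.1, habs2.2, hprod, hexp]
  rw [hDE]
  calc J τ μ0 γ R1 π1.1 - J τ μ0 γ R1 π2.1 ≤ 2 * (BG * (1 - γ)⁻¹) := hmain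
    _ = 4 * (1 - γ)⁻¹ * (Real.sqrt wmin)⁻¹ * (n1 * D) := by
        rw [hBG, hsqrtGG]
        field_simp
        ring
    _ ≤ 4 * (1 - γ)⁻¹ * (Real.sqrt wmin)⁻¹ * ((4 * L) * D) := by
        have h4 : n1 * D ≤ (4 * L) * D := mul_le_mul_of_nonneg_right hn1le hDnn
        have hpos : (0:ℝ) ≤ 4 * (1 - γ)⁻¹ * (Real.sqrt wmin)⁻¹ := by positivity
        exact mul_le_mul_of_nonneg_left h4 hpos
    _ = 16 * (1 - γ)⁻¹ * (Real.sqrt wmin)⁻¹ * L * D := by ring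


end RewardPaper
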